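/- Every equivalence-equipped argumentation framework has at least one wide defence-complete extension, at least one wide defence-preferred extension, and at least one wide defence-grounded extension. -/

import Mathlib

namespace EEAF

variable {A : Type*}

/-- Equivalence closure of a set of arguments. -/
def cl (equiv : A → A → Prop) (S : Set A) : Set A := {u | ∃ v ∈ S, equiv u v}

/-- `S` is simple-conflict-free: no attacks among members of `S`. -/
def SimpleCF (att : A → A → Prop) (S : Set A) : Prop := ∀ u ∈ S, ∀ v ∈ S, ¬ att u v

/-- `S` is wide-conflict-free: its equivalence closure is simple-conflict-free. -/
def WideCF (att equiv : A → A → Prop) (S : Set A) : Prop := SimpleCF att (cl equiv S)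

/-- `S` simple-defends `u`. -/
def SimpleDef (att : A → A → Prop) (S : Set A) (u : A) : Prop :=
  ∀ v, att v u → ∃ w ∈ S, att w v

/-- `S` wide-defends `u`: it simple-defends every member of `cl {u}`. -/
def WideDef (att equiv : A → A → Prop) (S : Set A) (u : A) : Prop :=
  ∀ x ∈ cl equiv ({u} : Set A), SimpleDef att S x

/-- `S` is simple-admissible. -/
def SimpleAdm (att : A → A → Prop) (S : Set A) : Prop :=
  SimpleCF att S ∧ ∀ u ∈ S, SimpleDef att S u

/-- `S` is wide-admissible. -/
def WideAdm (att equiv : A → A → Prop) (S : Set A) : Prop :=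
  WideCF att equiv S ∧ ∀ u ∈ S, WideDef att equiv S u

/-- `S` is closed under equivalence. -/
def ClosedEquiv (equiv : A → A → Prop) (S : Set A) : Prop := S = cl equiv S

/-- `S` is closed under wide defence. -/
def ClosedWideDef (att equiv : A → A → Prop) (S : Set A) : Prop :=
  ∀ u, WideDef att equiv S u → u ∈ S

/-- Wide defence-complete extension. -/
def WideDefComplete (att equiv : A → A → Prop) (S : Set A) : Prop :=
  WideAdm att equiv S ∧ ClosedWideDef att equiv S

/-- Characteristic operator: all arguments wide-defended by `S`. -/
def Fop (att equiv : A → A → Prop) (S : Set A) : Set A := {u | WideDef att equiv S u}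

lemma Fop_mono {att equiv : A → A → Prop} {S T : Set A} (h : S ⊆ T) :
    Fop att equiv S ⊆ Fop att equiv T := by
  intro u hu x hx v hv
  obtain ⟨w, hw, hww⟩ := hu x hx v hv
  exact ⟨w, h hw, hww⟩

lemma wideCF_Fop {att equiv : A → A → Prop} (heq : Equivalence equiv) {S : Set A}
    (hS : WideCF att equiv S) : WideCF att equiv (Fop att equiv S) := by
  intro x hx y hy hatt
  obtain ⟨a, ha, hxa⟩ := hx
  obtain ⟨b, hb, hyb⟩ := hy
  -- `S` simple-defends `y` since `y ∈ cl {b}` and `b ∈ Fop S`.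
  obtain ⟨w, hw, hwx⟩ := hb y ⟨b, rfl, hyb⟩ x hatt
  -- `S` simple-defends `x` since `x ∈ cl {a}`, getting `w' ∈ S` attacking `w`.
  obtain ⟨w', hw', hww⟩ := ha x ⟨a, rfl, hxa⟩ w hwx
  exact hS w' ⟨w', hw', heq.refl w'⟩ w ⟨w, hw, heq.refl w⟩ hww

/-- Existence of wide defence-complete, -preferred and -grounded extensions. -/
theorem exists_wideDef_complete_preferred_grounded
    (A : Type*) [Fintype A] (att equiv : A → A → Prop) (heq : Equivalence equiv) :
    (∃ S : Set A, WideDefComplete att equiv S) ∧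
    (∃ S : Set A, WideDefComplete att equiv S ∧
      ∀ T, WideDefComplete att equiv T → S ⊆ T → T = S) ∧
    (∃ S : Set A, WideDefComplete att equiv S ∧
      ∀ T, WideDefComplete att equiv T → T ⊆ S → T = S) := by
  -- First, produce one complete extension as a maximal element of
  -- the family of wide-conflict-free sets `S` with `S ⊆ Fop S`.
  have hexists : ∃ S : Set A, WideDefComplete att equiv S := by
    set 𝒜 : Set (Set A) := {S | WideCF att equiv S ∧ S ⊆ Fop att equiv S} with h𝒜
    have hne : 𝒜.Nonempty := by
      refine ⟨∅, ?_, ?_⟩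
      · rintro x ⟨v, hv, -⟩; exact absurd hv (Set.notMem_empty v)
      · exact Set.empty_subset _
    obtain ⟨S, hS, hmax⟩ := Set.Finite.exists_maximalFor id 𝒜 (Set.toFinite 𝒜) hne
    obtain ⟨hScf, hSsub⟩ := hS
    have hFop : Fop att equiv S ∈ 𝒜 :=
      ⟨wideCF_Fop heq hScf, Fop_mono hSsub⟩
    have hfix : S = Fop att equiv S := Set.Subset.antisymm hSsub (hmax hFop hSsub)
    refine ⟨S, ⟨hScf, fun u hu => ?_⟩, fun u hu => ?_⟩
    · rw [hfix] at hu; exact hu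
    · rw [hfix]; exact hu
  refine ⟨hexists, ?_, ?_⟩
  · obtain ⟨S, hS, hmax⟩ := Set.Finite.exists_maximalFor id
      {S | WideDefComplete att equiv S} (Set.toFinite _) hexists
    exact ⟨S, hS, fun T hT hST => Set.Subset.antisymm (hmax hT hST) hST⟩
  · obtain ⟨S, hS, hmin⟩ := Set.Finite.exists_minimalFor id
      {S | WideDefComplete att equiv S} (Set.toFinite _) hexists
    exact ⟨S, hS, fun T hT hTS => Set.Subset.antisymm hTS (hmin hT hTS)⟩

end EEAF
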